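/- If a compact metric space (X,d) admits a topological well-ordering, then X is countable. -/

import Mathlib

/-- If a compact metric space admits a topological well-ordering (a well-order all of
whose initial segments are open in the metric topology), then `X` is countable. -/
theorem stmt_3 {X : Type*} [MetricSpace X] [CompactSpace X]
    (r : X → X → Prop) (hwo : IsWellOrder X r)
    (hopen : ∀ x : X, IsOpen {y : X | r y x}) :
    Countable X := by
  obtain ⟨B, hBc, -, hB⟩ := TopologicalSpace.exists_countable_basis X
  set N : Set X := {x | ∃ y, r x y} with hN
  set M : Set X := {x | ∀ y, ¬ r x y} with hM
  -- for x ∈ N, the set {y | r y x} ∪ {x} is open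
  have key : ∀ x ∈ N, IsOpen ({y | r y x} ∪ {x}) := by
    rintro x ⟨y₀, hy₀⟩
    have hne : {y | r x y}.Nonempty := ⟨y₀, hy₀⟩
    set s := hwo.wf.min {y | r x y} hne with hs
    have hmem : r x s := hwo.wf.min_mem _ hne
    have heq : ({y | r y x} ∪ {x}) = {y | r y s} := by
      ext z
      simp only [Set.mem_union, Set.mem_setOf_eq, Set.mem_singleton_iff]
      constructor
      · rintro (h | rfl)
        · exact (haveI := hwo; IsTrans.trans (r := r) _ _ _ h hmem)
        · exact hmem
      · intro h
        rcases (haveI := hwo; trichotomous_of r z x) with h' | h' | h'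
        · exact Or.inl h'
        · exact Or.inr h'
        · exact absurd h (hwo.wf.not_lt_min _ h')
    rw [heq]
    exact hopen s
  -- choose basic opens
  have hchoice : ∀ x ∈ N, ∃ b ∈ B, x ∈ b ∧ b ⊆ {y | r y x} ∪ {x} := by
    intro x hx
    exact hB.exists_subset_of_mem_open (Or.inr rfl) (key x hx)
  choose! f hfB hfx hfsub using hchoice
  have hNc : N.Countable := by
    have hinj : Set.InjOn f N := by
      intro a ha b hb hab
      by_contra hne
      rcases (haveI := hwo; trichotomous_of r a b) with h | h | h
      · have := hfsub a ha (hab ▸ hfx b hb)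
        rcases this with h' | h'
        · exact hwo.wf.asymmetric _ _ h h'
        · exact hne h'.symm
      · exact hne h
      · have := hfsub b hb (hab ▸ hfx a ha)
        rcases this with h' | h'
        · exact hwo.wf.asymmetric _ _ h h'
        · exact hne h'
    exact Set.countable_of_injective_of_countable_image hinj
      (hBc.mono (Set.image_subset_iff.mpr fun x hx => hfB x hx))
  have hMc : M.Countable := by
    apply Set.Subsingleton.countable
    intro a ha b hb
    rcases (haveI := hwo; trichotomous_of r a b) with h | h | h
    · exact absurd h (ha b)
    · exact h
    · exact absurd h (hb a)
  have : (Set.univ : Set X).Countable := by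
    have hcov : (Set.univ : Set X) ⊆ N ∪ M := by
      intro x _
      by_cases h : ∃ y, r x y
      · exact Or.inl h
      · exact Or.inr (fun y hy => h ⟨y, hy⟩)
    exact ((hNc.union hMc).mono hcov)
  exact Set.countable_univ_iff.mp this
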